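/- For any m, n ∈ ℕ and any real numbers l, z > 0, |C_{mn,l,z} − C_{m,l,z}| ≪ Σ_{p | n} 1/p, where p runs over the prime divisors of n and the implied constant is absolute. -/

import Mathlib

open scoped Classical
open Finset

lemma lem1 (s : Finset ℕ) (hs : ∀ p ∈ s, p.Prime) :
    Nat.totient (∏ p ∈ s, p) = ∏ p ∈ s, (p - 1) := by
  have h := Nat.totient_mul_prod_primeFactors (∏ p ∈ s, p)
  rw [Nat.primeFactors_prod hs] at h
  have hpos : 0 < ∏ p ∈ s, p := Finset.prod_pos fun p hp => (hs p hp).pos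
  refine Nat.eq_of_mul_eq_mul_left hpos ?_
  rw [mul_comm]; exact h

lemma lem2 (s : Finset ℕ) (hs : ∀ p ∈ s, p.Prime) :
    ∏ p ∈ s, p ≤ 2 * (∏ p ∈ s, (p - 1))^2 := by
  by_cases h2 : 2 ∈ s
  · rw [← Finset.prod_erase_mul s _ h2, ← Finset.prod_erase_mul s (fun p => p - 1) h2]
    have key : ∏ p ∈ s.erase 2, p ≤ (∏ p ∈ s.erase 2, (p - 1))^2 := by
      rw [← Finset.prod_pow]
      refine Finset.prod_le_prod' fun p hp => ?_
      have hp3 : 3 ≤ p := by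
        have := (hs p (Finset.mem_of_mem_erase hp)).two_le
        have hne := Finset.ne_of_mem_erase hp
        omega
      obtain ⟨q, rfl⟩ := Nat.exists_eq_add_of_le hp3
      have h : 3 + q - 1 = q + 2 := by omega
      rw [h]; nlinarith
    calc (∏ p ∈ s.erase 2, p) * 2 ≤ (∏ p ∈ s.erase 2, (p-1))^2 * 2 := by
          exact Nat.mul_le_mul_right 2 key
      _ = 2 * ((∏ p ∈ s.erase 2, (p-1)) * (2 - 1))^2 := by ring
  · have key : ∏ p ∈ s, p ≤ (∏ p ∈ s, (p - 1))^2 := by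
      rw [← Finset.prod_pow]
      refine Finset.prod_le_prod' fun p hp => ?_
      have hp3 : 3 ≤ p := by
        have := (hs p hp).two_le
        have : p ≠ 2 := fun h => h2 (h ▸ hp)
        omega
      obtain ⟨q, rfl⟩ := Nat.exists_eq_add_of_le hp3
      have h : 3 + q - 1 = q + 2 := by omega
      rw [h]; nlinarith
    omega

lemma lem2' (e : ℕ) (he : 1 ≤ e) : e ≤ 2 * (Nat.totient e)^2 := by
  set r := ∏ p ∈ e.primeFactors, p with hr
  have hrdvd : r ∣ e := Nat.prod_primeFactors_dvd e
  have hrpos : 0 < r := Finset.prod_pos fun p hp => (Nat.prime_of_mem_primeFactors hp).pos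
  have hre : r ≤ e := Nat.le_of_dvd he hrdvd
  have hprimes : ∀ p ∈ e.primeFactors, p.Prime := fun p hp => Nat.prime_of_mem_primeFactors hp
  have h1 : Nat.totient r = ∏ p ∈ e.primeFactors, (p - 1) := lem1 _ hprimes
  have h2 : r ≤ 2 * (Nat.totient r)^2 := h1 ▸ lem2 _ hprimes
  have hkey : Nat.totient e * r = e * Nat.totient r := by
    have := Nat.totient_mul_prod_primeFactors e
    rw [← hr] at this; rw [this, h1]
  -- 2 * φ(e)^2 * r^2 = 2 * e^2 * φ(r)^2 ≥ e^2 * r ≥ e * r * r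
  have hsq : 2 * (Nat.totient e)^2 * r^2 = 2 * e^2 * (Nat.totient r)^2 := by
    have : (Nat.totient e * r)^2 = (e * Nat.totient r)^2 := by rw [hkey]
    nlinarith [this]
  have h3 : e * r * r ≤ 2 * (Nat.totient e)^2 * r^2 := by
    rw [hsq]
    calc e * r * r ≤ e * e * r := by
          have := Nat.mul_le_mul_left (e * r) hre
          nlinarith
      _ ≤ e * e * (2 * (Nat.totient r)^2) := Nat.mul_le_mul_left _ h2
      _ = 2 * e^2 * (Nat.totient r)^2 := by ring
  have := Nat.le_of_mul_le_mul_right (by nlinarith [h3] : e * r^2 ≤ 2 * (Nat.totient e)^2 * r^2) (by positivity : 0 < r^2)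
  exact this


-- key identity/inequality: 1/φ(f) ≤ (1/f) Σ_{e ≤ N, e | f} 1/φ(e)
lemma lem3 (f N : ℕ) (hf : 1 ≤ f) (hfN : f ≤ N) :
    1 / (Nat.totient f : ℝ) ≤
      (1 / (f : ℝ)) * ∑ e ∈ (Finset.Icc 1 N).filter (fun e => e ∣ f), 1 / (Nat.totient e : ℝ) := by
  have hφpos : 0 < Nat.totient f := Nat.totient_pos.2 hf
  have hfpos : (0:ℝ) < f := by exact_mod_cast hf
  -- cast product formula
  have hcast : (Nat.totient f : ℝ) * ∏ p ∈ f.primeFactors, (p:ℝ) =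
      (f:ℝ) * ∏ p ∈ f.primeFactors, ((p:ℝ) - 1) := by
    have h := Nat.totient_mul_prod_primeFactors f
    have := congrArg (Nat.cast : ℕ → ℝ) h
    push_cast at this
    rw [this]
    refine congrArg _ (Finset.prod_congr rfl fun p hp => ?_)
    have := (Nat.prime_of_mem_primeFactors hp).one_le
    push_cast [Nat.cast_sub this]
    ring
  have hprodpos : (0:ℝ) < ∏ p ∈ f.primeFactors, ((p:ℝ) - 1) := by
    refine Finset.prod_pos fun p hp => ?_
    have := (Nat.prime_of_mem_primeFactors hp).two_le
    have : (2:ℝ) ≤ p := by exact_mod_cast this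
    linarith
  have hppos : (0:ℝ) < ∏ p ∈ f.primeFactors, (p:ℝ) := by
    refine Finset.prod_pos fun p hp => ?_
    exact_mod_cast (Nat.prime_of_mem_primeFactors hp).pos
  -- 1/φ f = (1/f) * ∏ p/(p-1)
  have hid : 1 / (Nat.totient f : ℝ) = (1/(f:ℝ)) * ∏ p ∈ f.primeFactors, ((p:ℝ)/((p:ℝ)-1)) := by
    rw [Finset.prod_div_distrib, div_mul_div_comm, one_mul,
      div_eq_div_iff (by positivity) (by positivity)]
    linear_combination -hcast
  -- ∏ p/(p-1) = Σ over subsets of ∏ 1/(p-1)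
  have hexp : ∏ p ∈ f.primeFactors, ((p:ℝ)/((p:ℝ)-1)) =
      ∑ t ∈ f.primeFactors.powerset, ∏ p ∈ t, (1/((p:ℝ)-1)) := by
    have : ∀ p ∈ f.primeFactors, (p:ℝ)/((p:ℝ)-1) = 1/((p:ℝ)-1) + 1 := by
      intro p hp
      have h2 : (2:ℝ) ≤ p := by exact_mod_cast (Nat.prime_of_mem_primeFactors hp).two_le
      have hne : (p:ℝ) - 1 ≠ 0 := by linarith
      field_simp
      ring
    rw [Finset.prod_congr rfl this, Finset.prod_add]
    simp
  -- subsets ↦ divisors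
  have hsub : ∑ t ∈ f.primeFactors.powerset, ∏ p ∈ t, (1/((p:ℝ)-1)) ≤
      ∑ e ∈ (Finset.Icc 1 N).filter (fun e => e ∣ f), 1 / (Nat.totient e : ℝ) := by
    have hinj : ∀ t ∈ f.primeFactors.powerset, ∀ t' ∈ f.primeFactors.powerset,
        (∏ p ∈ t, p) = (∏ p ∈ t', p) → t = t' := by
      intro t ht t' ht' h
      have h1 := Nat.primeFactors_prod (fun p hp => Nat.prime_of_mem_primeFactors
        (Finset.mem_powerset.1 ht hp))
      have h2 := Nat.primeFactors_prod (fun p hp => Nat.prime_of_mem_primeFactors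
        (Finset.mem_powerset.1 ht' hp))
      rw [← h1, ← h2, h]
    rw [show (∑ t ∈ f.primeFactors.powerset, ∏ p ∈ t, (1/((p:ℝ)-1))) =
        ∑ e ∈ f.primeFactors.powerset.image (fun t => ∏ p ∈ t, p), 1 / (Nat.totient e : ℝ) from ?_]
    · refine Finset.sum_le_sum_of_subset_of_nonneg ?_ (fun e _ _ => by positivity)
      intro e he
      obtain ⟨t, ht, rfl⟩ := Finset.mem_image.1 he
      have htp : ∀ p ∈ t, p.Prime := fun p hp =>
        Nat.prime_of_mem_primeFactors (Finset.mem_powerset.1 ht hp)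
      have hdvd : (∏ p ∈ t, p) ∣ f :=
        (Finset.prod_dvd_prod_of_subset _ _ _ (Finset.mem_powerset.1 ht)).trans
          (Nat.prod_primeFactors_dvd f)
      have hpos : 1 ≤ ∏ p ∈ t, p := Finset.one_le_prod' fun p hp => (htp p hp).one_le
      refine Finset.mem_filter.2 ⟨Finset.mem_Icc.2 ⟨hpos, (Nat.le_of_dvd hf hdvd).trans hfN⟩, hdvd⟩
    · rw [Finset.sum_image hinj]
      refine Finset.sum_congr rfl fun t ht => ?_
      have htp : ∀ p ∈ t, p.Prime := fun p hp =>
        Nat.prime_of_mem_primeFactors (Finset.mem_powerset.1 ht hp)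
      rw [lem1 t htp, Nat.cast_prod, one_div, ← Finset.prod_inv_distrib]
      refine Finset.prod_congr rfl fun p hp => ?_
      rw [Nat.cast_sub (htp p hp).one_le, Nat.cast_one, one_div]
  calc 1 / (Nat.totient f : ℝ) = (1/(f:ℝ)) * ∏ p ∈ f.primeFactors, ((p:ℝ)/((p:ℝ)-1)) := hid
    _ = (1/(f:ℝ)) * ∑ t ∈ f.primeFactors.powerset, ∏ p ∈ t, (1/((p:ℝ)-1)) := by rw [hexp]
    _ ≤ _ := by
        refine mul_le_mul_of_nonneg_left hsub (by positivity)


lemma lemB (e : ℕ) (he : 1 ≤ e) (y : ℝ) (hy : 0 < y) :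
    ∑ f ∈ (Finset.Icc 1 ⌈y⌉₊).filter (fun f : ℕ => y/2 ≤ (f:ℝ) ∧ e ∣ f), 1/(f:ℝ) ≤ 4 / e := by
  set k₁ : ℕ := max 1 ⌈y/(2*(e:ℝ))⌉₊ with hk₁
  set k₂ : ℕ := ⌈y⌉₊ / e with hk₂
  have hepos : (0:ℝ) < e := by exact_mod_cast he
  have hk₁pos : 1 ≤ k₁ := le_max_left _ _
  have hk₁real : y/(2*(e:ℝ)) ≤ (k₁:ℝ) := by
    calc y/(2*(e:ℝ)) ≤ (⌈y/(2*(e:ℝ))⌉₊ : ℝ) := Nat.le_ceil _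
      _ ≤ k₁ := Nat.cast_le.2 (le_max_right _ _)
  have hsubset : (Finset.Icc 1 ⌈y⌉₊).filter (fun f : ℕ => y/2 ≤ (f:ℝ) ∧ e ∣ f) ⊆
      (Finset.Icc k₁ k₂).image (fun k => e * k) := by
    intro f hf
    obtain ⟨hmem, hhalf, hdvd⟩ := Finset.mem_filter.1 hf
    obtain ⟨hf1, hfN⟩ := Finset.mem_Icc.1 hmem
    have hcast : (e:ℝ) * ((f/e : ℕ):ℝ) = (f:ℝ) := by
      exact_mod_cast congrArg (Nat.cast : ℕ → ℝ) (Nat.mul_div_cancel' hdvd)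
    refine Finset.mem_image.2 ⟨f / e, Finset.mem_Icc.2 ⟨?_, ?_⟩, Nat.mul_div_cancel' hdvd⟩
    · refine max_le ?_ ?_
      · exact (Nat.one_le_div_iff (by omega)).2 (Nat.le_of_dvd (by omega) hdvd)
      · rw [Nat.ceil_le, div_le_iff₀ (by positivity)]
        calc y ≤ 2 * (f:ℝ) := by linarith
          _ = ((f/e : ℕ):ℝ) * (2 * e) := by rw [← hcast]; ring
    · exact Nat.div_le_div_right hfN
  have hbound : ∑ f ∈ (Finset.Icc k₁ k₂).image (fun k => e * k), 1/(f:ℝ) ≤ 4 / e := by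
    rw [Finset.sum_image (fun a _ b _ h => Nat.eq_of_mul_eq_mul_left (by omega) h)]
    have hterm : ∀ k ∈ Finset.Icc k₁ k₂, 1/((e*k : ℕ):ℝ) ≤ 1/((e:ℝ)*k₁) := by
      intro k hk
      have hk1 := (Finset.mem_Icc.1 hk).1
      have hle : (e:ℝ) * k₁ ≤ ((e*k : ℕ):ℝ) := by
        push_cast
        have : (k₁:ℝ) ≤ k := by exact_mod_cast hk1
        nlinarith
      exact one_div_le_one_div_of_le (by positivity) hle
    have hk1r : (1:ℝ) ≤ (k₁:ℝ) := by exact_mod_cast hk₁pos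
    calc ∑ k ∈ Finset.Icc k₁ k₂, 1/((e*k : ℕ):ℝ)
        ≤ (Finset.Icc k₁ k₂).card * (1/((e:ℝ)*k₁)) := by
          refine (Finset.sum_le_card_nsmul _ _ _ hterm).trans ?_
          rw [nsmul_eq_mul]
      _ ≤ (4 * (k₁:ℝ)) * (1/((e:ℝ)*k₁)) := by
          refine mul_le_mul_of_nonneg_right ?_ (by positivity)
          rw [Nat.card_Icc]
          have hcard : ((k₂ + 1 - k₁ : ℕ):ℝ) ≤ (k₂:ℝ) + 1 := by
            have h : (k₂ + 1 - k₁ : ℕ) ≤ k₂ + 1 := Nat.sub_le _ _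
            calc ((k₂ + 1 - k₁ : ℕ):ℝ) ≤ ((k₂+1 : ℕ):ℝ) := by exact_mod_cast h
              _ = (k₂:ℝ) + 1 := by push_cast; ring
          refine hcard.trans ?_
          have hceil : (⌈y⌉₊:ℝ) ≤ y + 1 := by
            have := Nat.ceil_lt_add_one (le_of_lt hy)
            linarith
          have h2 : (k₂:ℝ) * e ≤ (⌈y⌉₊:ℝ) := by exact_mod_cast Nat.div_mul_le_self ⌈y⌉₊ e
          have her : (1:ℝ) ≤ e := by exact_mod_cast he
          have hstep : (k₂:ℝ) * e ≤ y + e := by linarith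
          have hy2 : y ≤ 2*(e:ℝ)*k₁ := by
            rw [div_le_iff₀ (by positivity)] at hk₁real; linarith
          nlinarith [hstep, hy2, hk1r, her, hepos]
      _ = 4 / e := by
          field_simp
  calc _ ≤ ∑ f ∈ (Finset.Icc k₁ k₂).image (fun k => e * k), 1/(f:ℝ) :=
        Finset.sum_le_sum_of_subset_of_nonneg hsubset (fun f _ _ => by positivity)
    _ ≤ 4 / e := hbound


lemma lemC : ∃ T : ℝ, 1 ≤ T ∧ ∀ N : ℕ,
    ∑ e ∈ Finset.Icc 1 N, 1/((e:ℝ) * (Nat.totient e : ℝ)) ≤ T := by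
  have hsum : Summable (fun n : ℕ => 1/(n:ℝ)^(3/2:ℝ)) := by
    rw [Real.summable_one_div_nat_rpow]; norm_num
  have htsum0 : 0 ≤ ∑' n : ℕ, 1/(n:ℝ)^(3/2:ℝ) := tsum_nonneg (fun n => by positivity)
  refine ⟨1 + Real.sqrt 2 * ∑' n : ℕ, 1/(n:ℝ)^(3/2:ℝ), by nlinarith [Real.sqrt_nonneg 2], ?_⟩
  intro N
  have hterm : ∀ e ∈ Finset.Icc 1 N,
      1/((e:ℝ) * (Nat.totient e : ℝ)) ≤ Real.sqrt 2 * (1/(e:ℝ)^(3/2:ℝ)) := by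
    intro e he
    have he1 : 1 ≤ e := (Finset.mem_Icc.1 he).1
    have hφ : 0 < Nat.totient e := Nat.totient_pos.2 he1
    have hx : (1:ℝ) ≤ (e:ℝ) := by exact_mod_cast he1
    have ht : (1:ℝ) ≤ (Nat.totient e : ℝ) := by exact_mod_cast hφ
    have h2 : (e:ℝ) ≤ 2 * ((Nat.totient e : ℝ))^2 := by exact_mod_cast lem2' e he1
    have hxpos : (0:ℝ) < e := by linarith
    have hsq : Real.sqrt e ≤ Real.sqrt 2 * (Nat.totient e : ℝ) := by
      rw [← Real.sqrt_sq (by linarith : (0:ℝ) ≤ (Nat.totient e : ℝ)), ← Real.sqrt_mul (by norm_num)]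
      exact Real.sqrt_le_sqrt h2
    have hrpow : (e:ℝ)^(3/2:ℝ) = (e:ℝ) * Real.sqrt e := by
      rw [show (3/2:ℝ) = 1 + 1/2 by norm_num, Real.rpow_add hxpos, Real.rpow_one,
        ← Real.sqrt_eq_rpow]
    rw [hrpow, mul_one_div, div_le_div_iff₀ (by positivity) (by positivity)]
    have hsqx : (0:ℝ) ≤ Real.sqrt e := Real.sqrt_nonneg _
    nlinarith [mul_le_mul_of_nonneg_left hsq (le_of_lt hxpos)]
  calc ∑ e ∈ Finset.Icc 1 N, 1/((e:ℝ) * (Nat.totient e : ℝ))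
      ≤ ∑ e ∈ Finset.Icc 1 N, Real.sqrt 2 * (1/(e:ℝ)^(3/2:ℝ)) := Finset.sum_le_sum hterm
    _ = Real.sqrt 2 * ∑ e ∈ Finset.Icc 1 N, 1/(e:ℝ)^(3/2:ℝ) := by rw [Finset.mul_sum]
    _ ≤ Real.sqrt 2 * ∑' n : ℕ, 1/(n:ℝ)^(3/2:ℝ) := by
        refine mul_le_mul_of_nonneg_left ?_ (Real.sqrt_nonneg 2)
        exact Summable.sum_le_tsum _ (fun i _ => by positivity) hsum
    _ ≤ 1 + Real.sqrt 2 * ∑' n : ℕ, 1/(n:ℝ)^(3/2:ℝ) := by linarith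


lemma lemML : ∃ K : ℝ, 1 ≤ K ∧ ∀ y : ℝ, 0 < y →
    ∑ f ∈ (Finset.Icc 1 ⌈y⌉₊).filter (fun f : ℕ => y/2 ≤ (f:ℝ)), 1/(Nat.totient f : ℝ) ≤ K := by
  obtain ⟨T, hT1, hT⟩ := lemC
  refine ⟨4*T, by linarith, ?_⟩
  intro y hy
  set N := ⌈y⌉₊ with hN
  set I := (Finset.Icc 1 N).filter (fun f : ℕ => y/2 ≤ (f:ℝ)) with hI
  have step1 : ∑ f ∈ I, 1/(Nat.totient f : ℝ) ≤
      ∑ f ∈ I, ∑ e ∈ Finset.Icc 1 N,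
        (if e ∣ f then (1/(f:ℝ)) * (1/(Nat.totient e : ℝ)) else 0) := by
    refine Finset.sum_le_sum fun f hf => ?_
    obtain ⟨hmem, _⟩ := Finset.mem_filter.1 hf
    obtain ⟨hf1, hfN⟩ := Finset.mem_Icc.1 hmem
    refine (lem3 f N hf1 hfN).trans_eq ?_
    rw [Finset.mul_sum, Finset.sum_filter]
  have step2 : ∑ f ∈ I, ∑ e ∈ Finset.Icc 1 N,
        (if e ∣ f then (1/(f:ℝ)) * (1/(Nat.totient e : ℝ)) else 0) =
      ∑ e ∈ Finset.Icc 1 N, (1/(Nat.totient e : ℝ)) *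
        ∑ f ∈ (Finset.Icc 1 N).filter (fun f : ℕ => y/2 ≤ (f:ℝ) ∧ e ∣ f), 1/(f:ℝ) := by
    rw [Finset.sum_comm]
    refine Finset.sum_congr rfl fun e he => ?_
    rw [show (Finset.Icc 1 N).filter (fun f : ℕ => y/2 ≤ (f:ℝ) ∧ e ∣ f) =
        I.filter (fun f : ℕ => e ∣ f) by rw [hI, Finset.filter_filter]]
    rw [Finset.mul_sum, ← Finset.sum_filter]
    exact Finset.sum_congr rfl fun f _ => mul_comm _ _
  have step3 : ∑ e ∈ Finset.Icc 1 N, (1/(Nat.totient e : ℝ)) *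
        ∑ f ∈ (Finset.Icc 1 N).filter (fun f : ℕ => y/2 ≤ (f:ℝ) ∧ e ∣ f), 1/(f:ℝ) ≤
      ∑ e ∈ Finset.Icc 1 N, 4 * (1/((e:ℝ) * (Nat.totient e : ℝ))) := by
    refine Finset.sum_le_sum fun e he => ?_
    have he1 : 1 ≤ e := (Finset.mem_Icc.1 he).1
    have hφ : 0 < Nat.totient e := Nat.totient_pos.2 he1
    have hφr : (0:ℝ) < (Nat.totient e : ℝ) := by exact_mod_cast hφ
    have her : (0:ℝ) < e := by exact_mod_cast he1
    calc (1/(Nat.totient e : ℝ)) *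
          ∑ f ∈ (Finset.Icc 1 N).filter (fun f : ℕ => y/2 ≤ (f:ℝ) ∧ e ∣ f), 1/(f:ℝ)
        ≤ (1/(Nat.totient e : ℝ)) * (4/(e:ℝ)) := by
          refine mul_le_mul_of_nonneg_left ?_ (by positivity)
          exact lemB e he1 y hy
      _ = 4 * (1/((e:ℝ) * (Nat.totient e : ℝ))) := by field_simp
  calc ∑ f ∈ I, 1/(Nat.totient f : ℝ) ≤ _ := step1
    _ = _ := step2
    _ ≤ _ := step3
    _ = 4 * ∑ e ∈ Finset.Icc 1 N, 1/((e:ℝ) * (Nat.totient e : ℝ)) := by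
        rw [Finset.mul_sum]
    _ ≤ 4 * T := by
        refine mul_le_mul_of_nonneg_left (hT N) (by norm_num)


lemma lemPhi (p d : ℕ) (hp : p.Prime) (hpd : p ∣ d) (hd1 : 1 ≤ d) :
    (p - 1) * Nat.totient (d / p) ≤ Nat.totient d := by
  obtain ⟨f, rfl⟩ := hpd
  rw [Nat.mul_div_cancel_left f hp.pos]
  by_cases hcase : p ∣ f
  · rw [Nat.totient_mul_of_prime_of_dvd hp hcase]
    exact Nat.mul_le_mul_right _ (Nat.sub_le p 1)
  · rw [Nat.totient_mul (hp.coprime_iff_not_dvd.2 hcase), Nat.totient_prime hp]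

lemma lemP {K : ℝ} (hK1 : 1 ≤ K)
    (hK : ∀ y : ℝ, 0 < y →
      ∑ f ∈ (Finset.Icc 1 ⌈y⌉₊).filter (fun f : ℕ => y/2 ≤ (f:ℝ)), 1/(Nat.totient f : ℝ) ≤ K)
    (p : ℕ) (hp : p.Prime) (x : ℝ) (hx : 0 < x) :
    ∑ d ∈ (Finset.Icc 1 ⌈x⌉₊).filter
        (fun d : ℕ => x/2 ≤ (d:ℝ) ∧ (d:ℝ) ≤ x ∧ p ∣ d), 1/(Nat.totient d : ℝ) ≤ 2*K/p := by
  set S := (Finset.Icc 1 ⌈x⌉₊).filter (fun d : ℕ => x/2 ≤ (d:ℝ) ∧ (d:ℝ) ≤ x ∧ p ∣ d) with hS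
  have hppos : (0:ℝ) < p := by exact_mod_cast hp.pos
  have hp2 : (2:ℝ) ≤ p := by exact_mod_cast hp.two_le
  have hmem : ∀ d ∈ S, 1 ≤ d ∧ x/2 ≤ (d:ℝ) ∧ (d:ℝ) ≤ x ∧ p ∣ d := by
    intro d hd
    obtain ⟨hmem, h1, h2, h3⟩ := Finset.mem_filter.1 hd
    exact ⟨(Finset.mem_Icc.1 hmem).1, h1, h2, h3⟩
  have step1 : ∑ d ∈ S, 1/(Nat.totient d : ℝ) ≤
      ∑ d ∈ S, (2/(p:ℝ)) * (1/(Nat.totient (d/p) : ℝ)) := by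
    refine Finset.sum_le_sum fun d hd => ?_
    obtain ⟨hd1, _, _, hpd⟩ := hmem d hd
    have hdp1 : 1 ≤ d / p := (Nat.one_le_div_iff hp.pos).2 (Nat.le_of_dvd hd1 hpd)
    have hφd : (0:ℝ) < (Nat.totient d : ℝ) := by
      exact_mod_cast Nat.totient_pos.2 hd1
    have hφdp : (0:ℝ) < (Nat.totient (d/p) : ℝ) := by
      exact_mod_cast Nat.totient_pos.2 hdp1
    have hkey : ((p:ℝ) - 1) * (Nat.totient (d/p) : ℝ) ≤ (Nat.totient d : ℝ) := by
      have := lemPhi p d hp hpd hd1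
      have hc : (((p-1) * Nat.totient (d/p) : ℕ) : ℝ) ≤ (Nat.totient d : ℝ) := by
        exact_mod_cast this
      rw [Nat.cast_mul, Nat.cast_sub hp.one_le] at hc
      exact_mod_cast hc
    have h2p : (p:ℝ) * (Nat.totient (d/p):ℝ) ≤ 2 * (Nat.totient d:ℝ) := by nlinarith
    have heq : (2:ℝ)/p * (1/(Nat.totient (d/p) : ℝ)) = 2/((p:ℝ)*(Nat.totient (d/p) : ℝ)) := by
      field_simp
    rw [heq, div_le_div_iff₀ hφd (by positivity)]
    linarith
  have step2 : ∑ d ∈ S, (2/(p:ℝ)) * (1/(Nat.totient (d/p) : ℝ)) =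
      (2/(p:ℝ)) * ∑ f ∈ S.image (fun d => d / p), 1/(Nat.totient f : ℝ) := by
    rw [Finset.mul_sum]
    rw [Finset.sum_image ?hinj]
    case hinj =>
      intro a ha b hb hab
      obtain ⟨_, _, _, hpa⟩ := hmem a ha
      obtain ⟨_, _, _, hpb⟩ := hmem b hb
      simp only at hab
      rw [← Nat.mul_div_cancel' hpa, ← Nat.mul_div_cancel' hpb, hab]
  have step3 : S.image (fun d => d / p) ⊆
      (Finset.Icc 1 ⌈x/p⌉₊).filter (fun f : ℕ => (x/p)/2 ≤ (f:ℝ)) := by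
    intro f hf
    obtain ⟨d, hd, rfl⟩ := Finset.mem_image.1 hf
    obtain ⟨hd1, hhalf, hle, hpd⟩ := hmem d hd
    have hdp1 : 1 ≤ d / p := (Nat.one_le_div_iff hp.pos).2 (Nat.le_of_dvd hd1 hpd)
    have hcast : ((d/p : ℕ):ℝ) = (d:ℝ)/(p:ℝ) := by
      rw [Nat.cast_div hpd (by exact_mod_cast hp.pos.ne')]
    refine Finset.mem_filter.2 ⟨Finset.mem_Icc.2 ⟨hdp1, ?_⟩, ?_⟩
    · have : ((d/p : ℕ):ℝ) ≤ ((⌈x/p⌉₊ : ℕ):ℝ) := by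
        rw [hcast]
        calc (d:ℝ)/p ≤ x/p := by gcongr
          _ ≤ ⌈x/p⌉₊ := Nat.le_ceil _
      exact_mod_cast this
    · rw [hcast, div_div, div_le_div_iff₀ (by positivity) hppos]
      nlinarith [mul_le_mul_of_nonneg_right (by linarith [hhalf] : x ≤ 2*(d:ℝ)) (le_of_lt hppos)]
  calc ∑ d ∈ S, 1/(Nat.totient d : ℝ) ≤ _ := step1
    _ = _ := step2
    _ ≤ (2/(p:ℝ)) * K := by
        refine mul_le_mul_of_nonneg_left ?_ (by positivity)
        refine le_trans (Finset.sum_le_sum_of_subset_of_nonneg step3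
          (fun f _ _ => by positivity)) ?_
        exact hK (x/p) (by positivity)
    _ = 2*K/p := by ring


lemma lemD {K : ℝ} (hK1 : 1 ≤ K)
    (hK : ∀ y : ℝ, 0 < y →
      ∑ f ∈ (Finset.Icc 1 ⌈y⌉₊).filter (fun f : ℕ => y/2 ≤ (f:ℝ)), 1/(Nat.totient f : ℝ) ≤ K)
    (n : ℕ) (hn : 1 ≤ n) (x : ℝ) (hx : 0 < x) (s : Finset ℕ)
    (hs : s ⊆ Finset.Icc 1 ⌈x⌉₊)
    (hcond : ∀ d ∈ s, (x/2 ≤ (d:ℝ) ∧ (d:ℝ) ≤ x) ∧ ¬ Nat.Coprime d n) :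
    ∑ d ∈ s, 1/(Nat.totient d : ℝ) ≤ ∑ p ∈ n.primeFactors, 2*K/(p:ℝ) := by
  calc ∑ d ∈ s, 1/(Nat.totient d : ℝ)
      ≤ ∑ d ∈ s, ∑ p ∈ n.primeFactors, (if p ∣ d then 1/(Nat.totient d : ℝ) else 0) := by
        refine Finset.sum_le_sum fun d hd => ?_
        obtain ⟨-, hnc⟩ := hcond d hd
        obtain ⟨q, hq, hqd, hqn⟩ := Nat.Prime.not_coprime_iff_dvd.1 hnc
        have hqmem : q ∈ n.primeFactors :=
          Nat.mem_primeFactors.2 ⟨hq, hqn, by omega⟩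
        have hle := Finset.single_le_sum
          (f := fun p => if p ∣ d then 1/(Nat.totient d : ℝ) else 0)
          (fun i _ => by by_cases h : i ∣ d <;> simp [h] <;> positivity) hqmem
        simp only [if_pos hqd] at hle
        exact hle
    _ = ∑ p ∈ n.primeFactors, ∑ d ∈ s, (if p ∣ d then 1/(Nat.totient d : ℝ) else 0) :=
        Finset.sum_comm
    _ ≤ ∑ p ∈ n.primeFactors, 2*K/(p:ℝ) := by
        refine Finset.sum_le_sum fun p hp => ?_
        have hpp : p.Prime := Nat.prime_of_mem_primeFactors hp
        rw [← Finset.sum_filter]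
        refine le_trans (Finset.sum_le_sum_of_subset_of_nonneg ?_
          (fun d _ _ => by positivity)) (lemP hK1 hK p hpp x hx)
        intro d hd
        obtain ⟨hds, hpd⟩ := Finset.mem_filter.1 hd
        obtain ⟨⟨h1, h2⟩, -⟩ := hcond d hds
        exact Finset.mem_filter.2 ⟨hs hds, h1, h2, hpd⟩

/-- `C_{m,l,z} := Σ_{l/2 ≤ d < l, (d,m)=1} 1/φ(d) − Σ_{z/2 < d ≤ z, (d,m)=1} 1/φ(d)`,
the sums being over natural numbers `d`. -/
noncomputable def Cmlz (m : ℕ) (l z : ℝ) : ℝ :=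
  (∑ d ∈ (Finset.Icc 1 ⌈l⌉₊).filter
      (fun d : ℕ => l / 2 ≤ (d : ℝ) ∧ (d : ℝ) < l ∧ Nat.Coprime d m), 1 / (Nat.totient d : ℝ)) -
  (∑ d ∈ (Finset.Icc 1 ⌈z⌉₊).filter
      (fun d : ℕ => z / 2 < (d : ℝ) ∧ (d : ℝ) ≤ z ∧ Nat.Coprime d m), 1 / (Nat.totient d : ℝ))

/-- Lemma 2 (second statement) of the paper: for any `m, n ∈ ℕ` and reals `l, z > 0`,
`|C_{mn,l,z} − C_{m,l,z}| ≪ Σ_{p ∣ n} 1/p`, with an absolute implied constant. -/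
theorem statement_5 :
    ∃ C : ℝ, 0 < C ∧ ∀ (m n : ℕ) (l z : ℝ), 1 ≤ m → 1 ≤ n → 0 < l → 0 < z →
      |Cmlz (m * n) l z - Cmlz m l z| ≤ C * ∑ p ∈ n.primeFactors, 1 / (p : ℝ) := by
  obtain ⟨K, hK1, hK⟩ := lemML
  refine ⟨4*K, by linarith, ?_⟩
  intro m n l z hm hn hl hz
  set A₁ := (Finset.Icc 1 ⌈l⌉₊).filter
      (fun d : ℕ => l / 2 ≤ (d : ℝ) ∧ (d : ℝ) < l ∧ Nat.Coprime d m) with hA₁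
  set B₁ := (Finset.Icc 1 ⌈z⌉₊).filter
      (fun d : ℕ => z / 2 < (d : ℝ) ∧ (d : ℝ) ≤ z ∧ Nat.Coprime d m) with hB₁
  have hAsplit : (Finset.Icc 1 ⌈l⌉₊).filter
      (fun d : ℕ => l / 2 ≤ (d : ℝ) ∧ (d : ℝ) < l ∧ Nat.Coprime d (m*n)) =
      A₁.filter (fun d => Nat.Coprime d n) := by
    rw [hA₁, Finset.filter_filter]
    refine Finset.filter_congr fun d _ => ?_
    rw [Nat.coprime_mul_iff_right]
    tauto
  have hBsplit : (Finset.Icc 1 ⌈z⌉₊).filter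
      (fun d : ℕ => z / 2 < (d : ℝ) ∧ (d : ℝ) ≤ z ∧ Nat.Coprime d (m*n)) =
      B₁.filter (fun d => Nat.Coprime d n) := by
    rw [hB₁, Finset.filter_filter]
    refine Finset.filter_congr fun d _ => ?_
    rw [Nat.coprime_mul_iff_right]
    tauto
  set D₁ := ∑ d ∈ A₁.filter (fun d => ¬ Nat.Coprime d n), 1/(Nat.totient d : ℝ) with hD₁
  set D₂ := ∑ d ∈ B₁.filter (fun d => ¬ Nat.Coprime d n), 1/(Nat.totient d : ℝ) with hD₂
  have hsum₁ : ∑ d ∈ A₁.filter (fun d => Nat.Coprime d n), 1/(Nat.totient d : ℝ) + D₁ =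
      ∑ d ∈ A₁, 1/(Nat.totient d : ℝ) :=
    Finset.sum_filter_add_sum_filter_not A₁ _ _
  have hsum₂ : ∑ d ∈ B₁.filter (fun d => Nat.Coprime d n), 1/(Nat.totient d : ℝ) + D₂ =
      ∑ d ∈ B₁, 1/(Nat.totient d : ℝ) :=
    Finset.sum_filter_add_sum_filter_not B₁ _ _
  have hdiff : Cmlz (m * n) l z - Cmlz m l z = D₂ - D₁ := by
    rw [Cmlz, Cmlz, hAsplit, hBsplit, ← hA₁, ← hB₁]
    linarith [hsum₁, hsum₂]
  have hD₁nonneg : 0 ≤ D₁ := Finset.sum_nonneg fun d _ => by positivity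
  have hD₂nonneg : 0 ≤ D₂ := Finset.sum_nonneg fun d _ => by positivity
  have hD₁le : D₁ ≤ ∑ p ∈ n.primeFactors, 2*K/(p:ℝ) := by
    refine lemD hK1 hK n hn l hl _ (Finset.filter_subset _ _ |>.trans (Finset.filter_subset _ _)) ?_
    intro d hd
    obtain ⟨hdA, hnc⟩ := Finset.mem_filter.1 hd
    obtain ⟨-, h1, h2, -⟩ := Finset.mem_filter.1 hdA
    exact ⟨⟨h1, le_of_lt h2⟩, hnc⟩
  have hD₂le : D₂ ≤ ∑ p ∈ n.primeFactors, 2*K/(p:ℝ) := by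
    refine lemD hK1 hK n hn z hz _ (Finset.filter_subset _ _ |>.trans (Finset.filter_subset _ _)) ?_
    intro d hd
    obtain ⟨hdB, hnc⟩ := Finset.mem_filter.1 hd
    obtain ⟨-, h1, h2, -⟩ := Finset.mem_filter.1 hdB
    exact ⟨⟨le_of_lt h1, h2⟩, hnc⟩
  have hEeq : ∑ p ∈ n.primeFactors, 2*K/(p:ℝ) =
      2*K * ∑ p ∈ n.primeFactors, 1/(p:ℝ) := by
    rw [Finset.mul_sum]
    exact Finset.sum_congr rfl fun p _ => by ring
  have hSnonneg : 0 ≤ ∑ p ∈ n.primeFactors, 1/(p:ℝ) :=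
    Finset.sum_nonneg fun p _ => by positivity
  rw [hEeq] at hD₁le hD₂le
  rw [hdiff, abs_le]
  have hKS : (0:ℝ) ≤ K * ∑ p ∈ n.primeFactors, 1/(p:ℝ) :=
    mul_nonneg (by linarith) hSnonneg
  constructor <;> nlinarith [hKS]
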